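/- arXiv:math/0508045 — 8 statements merged into one kernel-verified Lean document; each statement's English description precedes it below -/
import Mathlib

section
/- For λ ∈ (0,1), the Jacobian determinant of F_λ at any z ≠ 0 equals 2λ(λ + (1-λ)|z|⁻¹). In particular, if λ ∈ (2^{-1/2}, 1), then Jac(F_λ)(z) > 2λ² > 1 for all z ≠ 0. -/
noncomputable def Fl (l : ℝ) (z : ℂ) : ℂ :=
  ((1 - l + l * ‖z‖ : ℝ) : ℂ) * (z / (‖z‖ : ℂ)) ^ 2 + 1

set_option maxHeartbeats 1000000
/-- The Jacobian determinant of F_λ at z ≠ 0 equals 2λ(λ + (1-λ)|z|⁻¹); and if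
λ ∈ (2^{-1/2}, 1) then this quantity is > 2λ² > 1. -/
theorem stmt_2 (l : ℝ) (hl : l ∈ Set.Ioo (0 : ℝ) 1) (z : ℂ) (hz : z ≠ 0) :
    (∃ L : ℂ →L[ℝ] ℂ, HasFDerivAt (Fl l) L z ∧
      LinearMap.det (L : ℂ →ₗ[ℝ] ℂ) = 2 * l * (l + (1 - l) * (‖z‖)⁻¹)) ∧
    (l ∈ Set.Ioo ((2 : ℝ) ^ (-(2 : ℝ)⁻¹)) 1 →
      2 * l * (l + (1 - l) * (‖z‖)⁻¹) > 2 * l ^ 2 ∧ 2 * l ^ 2 > 1) := by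
  have hr : (0:ℝ) < ‖z‖ := norm_pos_iff.mpr hz
  constructor
  · have h0 : ‖z‖ ^ 2 ≠ 0 := pow_ne_zero _ (norm_ne_zero_iff.mpr hz)
    -- derivative of abs
    have habs : HasFDerivAt (fun w : ℂ => (‖w‖ : ℝ))
        ((1 / (2 * Real.sqrt (‖z‖ ^ 2))) • (2 • (innerSL ℝ z))) z := by
      have h := ((hasFDerivAt_id z).norm_sq).sqrt h0
      have he : (fun w : ℂ => Real.sqrt (‖(id w : ℂ)‖ ^ 2)) = fun w : ℂ => (‖w‖ : ℝ) := by
        funext w; simp [Real.sqrt_sq (norm_nonneg w)]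
      rw [← he]; convert h using 1 <;> rfl
    -- derivative of abs^2
    have habs2 : HasFDerivAt (fun w : ℂ => (‖w‖ : ℝ) ^ 2) (2 • (innerSL ℝ z)) z := by
      have h := (hasFDerivAt_id z).norm_sq
      have he : (fun w : ℂ => ‖(id w : ℂ)‖ ^ 2) = fun w : ℂ => (‖w‖ : ℝ)^2 := by
        funext w; simp
      rw [← he]; convert h using 1 <;> rfl
    have hinv2 := (hasDerivAt_inv (by positivity : ((‖z‖ : ℝ) ^ 2) ≠ 0)).comp_hasFDerivAt z habs2
    -- complex pieces
    have hc : HasFDerivAt (fun w : ℂ => ((1 - l + l * ‖w‖ : ℝ) : ℂ))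
        (Complex.ofRealCLM.comp (l • ((1 / (2 * Real.sqrt (‖z‖ ^ 2))) • (2 • (innerSL ℝ z))))) z := by
      exact Complex.ofRealCLM.hasFDerivAt.comp z ((habs.const_mul l).const_add (1 - l))
    have hq2 := Complex.ofRealCLM.hasFDerivAt.comp z hinv2
    have hsq : HasFDerivAt (fun w : ℂ => w ^ 2)
        ((ContinuousLinearMap.smulRight (1 : ℂ →L[ℂ] ℂ) (2 * z ^ 1)).restrictScalars ℝ) z :=
      (hasDerivAt_pow 2 z).hasFDerivAt.restrictScalars ℝ
    have hq := hsq.mul hq2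
    have hF := (hc.mul hq).add_const 1
    have hFl : Fl l = fun w =>
        ((1 - l + l * ‖w‖ : ℝ) : ℂ) * (w ^ 2 * ((((‖w‖ : ℝ) ^ 2)⁻¹ : ℝ) : ℂ)) + 1 := by
      funext w
      simp only [Fl, div_pow]
      push_cast
      ring
    rw [hFl]
    refine ⟨_, hF, ?_⟩
    have hdet : ∀ L : ℂ →L[ℝ] ℂ, LinearMap.det (L : ℂ →ₗ[ℝ] ℂ) =
        (L 1).re * (L Complex.I).im - (L Complex.I).re * (L 1).im := by
      intro L
      rw [← LinearMap.det_toMatrix Complex.basisOneI, Matrix.det_fin_two]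
      simp [LinearMap.toMatrix_apply]
    rw [hdet]
    have hs : Real.sqrt (‖z‖ ^ 2) = ‖z‖ := Real.sqrt_sq (norm_nonneg z)
    have hr2 : z.re ^ 2 + z.im ^ 2 = ‖z‖ ^ 2 := by
      rw [Complex.sq_norm, Complex.normSq_apply]; ring
    simp only [ContinuousLinearMap.add_apply, ContinuousLinearMap.smul_apply,
      ContinuousLinearMap.comp_apply, ContinuousLinearMap.coe_smul', Pi.smul_apply,
      ContinuousLinearMap.smulRight_apply, ContinuousLinearMap.one_apply,
      ContinuousLinearMap.coe_restrictScalars', Complex.ofRealCLM_apply,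
      innerSL_apply_apply, Complex.inner, smul_eq_mul, Complex.real_smul,
      Function.comp, hs, Pi.mul_apply, Function.comp_apply]
    simp only [pow_two, pow_one, Complex.mul_re, Complex.mul_im, Complex.add_re, Complex.add_im,
      Complex.ofReal_re, Complex.ofReal_im, Complex.I_re, Complex.I_im,
      Complex.conj_re, Complex.conj_im, Complex.one_re, Complex.one_im,
      Complex.re_ofNat, Complex.im_ofNat]
    rw [show ‖z‖ * ‖z‖ = ‖z‖ ^ 2 from (pow_two _).symm] -- maybe several
    generalize hra : ‖z‖ = r at *
    generalize z.re = a at *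
    generalize z.im = b at *
    have hrne : r ≠ 0 := ne_of_gt hr
    field_simp
    linear_combination ((-16:ℝ)*r^2*b^2 + (-16:ℝ)*r^2*a^2 + (32:ℝ)*l*r^2*b^2 + (32:ℝ)*l*r^2*a^2 + (-24:ℝ)*l*r^3*b^2 + (-24:ℝ)*l*r^3*a^2 + (8:ℝ)*l*r^5 + (-16:ℝ)*l^2*r^2*b^2 + (-16:ℝ)*l^2*r^2*a^2 + (24:ℝ)*l^2*r^3*b^2 + (24:ℝ)*l^2*r^3*a^2 + (-8:ℝ)*l^2*r^4*b^2 + (-8:ℝ)*l^2*r^4*a^2 + (-8:ℝ)*l^2*r^5 + (8:ℝ)*l^2*r^6) * hr2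
  · rintro ⟨hm1, hm2⟩
    have hb0 : (0:ℝ) < (2:ℝ) ^ (-(2:ℝ)⁻¹) := Real.rpow_pos_of_pos (by norm_num) _
    have hsq : ((2:ℝ) ^ (-(2:ℝ)⁻¹)) ^ 2 = 2⁻¹ := by
      rw [← Real.rpow_natCast ((2:ℝ) ^ (-(2:ℝ)⁻¹)) 2, ← Real.rpow_mul (by norm_num : (0:ℝ) ≤ 2)]
      norm_num
    have hri : (0:ℝ) < (‖z‖)⁻¹ := inv_pos.mpr hr
    constructor
    · nlinarith [mul_pos (mul_pos hl.1 (sub_pos.mpr hl.2)) hri]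
    · nlinarith [pow_lt_pow_left₀ hm1 (le_of_lt hb0) (two_ne_zero)]
end

section
/- For every z₀ ∈ ℂ \ {0} and all a, b ∈ ℝ, the derivative of F_λ at z₀ applied to the tangent vector z₀(a + ib) equals (F_λ(z₀) - 1)·(aλ|z₀|/(1 - λ + λ|z₀|) + 2bi). -/
/-- The real derivative of F_λ at z₀ ≠ 0 applied to z₀(a + ib) equals
(F_λ(z₀) - 1)(aλ|z₀|/(1 - λ + λ|z₀|) + 2bi). -/
theorem stmt_3 (l : ℝ) (hl : l ∈ Set.Ioo (0 : ℝ) 1) (z₀ : ℂ) (hz : z₀ ≠ 0) :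
    ∃ L : ℂ →L[ℝ] ℂ, HasFDerivAt (Fl l) L z₀ ∧
      ∀ a b : ℝ, L (z₀ * ((a : ℂ) + (b : ℂ) * Complex.I)) =
        (Fl l z₀ - 1) *
          (((a * l * ‖z₀‖ / (1 - l + l * ‖z₀‖) : ℝ) : ℂ)
            + 2 * (b : ℂ) * Complex.I) := by
  have hn0 : ‖z₀‖ ≠ 0 := norm_ne_zero_iff.mpr hz
  have hn2 : (‖z₀‖ ^ 2 : ℝ) ≠ 0 := pow_ne_zero 2 hn0
  -- derivative of z ↦ ‖z‖^2
  have h1 : HasFDerivAt (fun z : ℂ => ‖z‖ ^ 2) (2 • innerSL ℝ z₀) z₀ :=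
    (hasStrictFDerivAt_norm_sq z₀).hasFDerivAt
  -- derivative of z ↦ ‖z‖
  have hsq : HasDerivAt Real.sqrt (1 / (2 * Real.sqrt (‖z₀‖ ^ 2))) (‖z₀‖ ^ 2) :=
    Real.hasDerivAt_sqrt hn2
  have hnorm : HasFDerivAt (fun z : ℂ => ‖z‖)
      ((1 / (2 * ‖z₀‖)) • (2 • innerSL ℝ z₀ : ℂ →L[ℝ] ℝ)) z₀ := by
    have := hsq.comp_hasFDerivAt z₀ h1
    simp only [Real.sqrt_sq (norm_nonneg z₀)] at this
    refine this.congr_of_eventuallyEq (Filter.Eventually.of_forall fun z => ?_)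
    simp [Function.comp, Real.sqrt_sq (norm_nonneg z)]
  set N : ℂ →L[ℝ] ℝ := (1 / (2 * ‖z₀‖)) • (2 • innerSL ℝ z₀ : ℂ →L[ℝ] ℝ) with hN
  -- derivative of the real coefficient φ z = (1 - l + l‖z‖) * (‖z‖^2)⁻¹
  have hc : HasFDerivAt (fun z : ℂ => 1 - l + l * ‖z‖) (l • N) z₀ :=
    (hnorm.const_mul l).const_add (1 - l)
  have hinv : HasFDerivAt (fun z : ℂ => (‖z‖ ^ 2)⁻¹)
      (-((‖z₀‖ ^ 2) ^ 2)⁻¹ • (2 • innerSL ℝ z₀ : ℂ →L[ℝ] ℝ)) z₀ :=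
    (hasDerivAt_inv hn2).comp_hasFDerivAt z₀ h1
  have hφ := hc.mul hinv
  -- derivative of z ↦ z ^ 2 as a real map
  have hz2 : HasFDerivAt (fun z : ℂ => z ^ 2)
      (((ContinuousLinearMap.id ℂ ℂ).smulRight (2 * z₀ ^ 1)).restrictScalars ℝ) z₀ :=
    ((hasDerivAt_pow 2 z₀).hasFDerivAt).restrictScalars ℝ
  have hG := (hφ.smul hz2).add_const (1 : ℂ)
  -- Fl agrees with this function near z₀
  have heq : Fl l =ᶠ[nhds z₀]
      (fun z : ℂ => ((1 - l + l * ‖z‖) * (‖z‖ ^ 2)⁻¹) • z ^ 2 + 1) := by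
    filter_upwards [eventually_ne_nhds hz] with z hz'
    have h0 : (‖z‖ : ℝ) ≠ 0 := norm_ne_zero_iff.mpr hz'
    simp only [Fl, Complex.real_smul, div_pow]
    push_cast
    field_simp
  refine ⟨_, hG.congr_of_eventuallyEq heq, fun a b => ?_⟩
  -- evaluate the derivative
  have hinner : (innerSL ℝ z₀ : ℂ →L[ℝ] ℝ) (z₀ * ((a : ℂ) + (b : ℂ) * Complex.I))
      = ‖z₀‖ ^ 2 * a := by
    rw [innerSL_apply_apply, Complex.inner]
    rw [show (z₀ * ((a : ℂ) + (b : ℂ) * Complex.I)) * (starRingEnd ℂ) z₀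
        = ((Complex.normSq z₀ : ℂ)) * ((a : ℂ) + (b : ℂ) * Complex.I) by
      rw [← Complex.mul_conj]; ring]
    simp [Complex.normSq_eq_norm_sq, Complex.mul_re, ← Complex.ofReal_pow]
  simp only [ContinuousLinearMap.add_apply, ContinuousLinearMap.smul_apply,
    ContinuousLinearMap.smulRight_apply, ContinuousLinearMap.coe_restrictScalars',
    ContinuousLinearMap.coe_smul', Pi.smul_apply, ContinuousLinearMap.id_apply, hN,
    hinner, Fl, Pi.mul_apply, smul_eq_mul, Complex.real_smul]
  have hr : (‖z₀‖ : ℝ) ≠ 0 := norm_ne_zero_iff.mpr hz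
  have hcne : (1 - l + l * ‖z₀‖) ≠ 0 := by
    have := norm_pos_iff.mpr hz
    nlinarith [hl.1, hl.2]
  have hrC : (‖z₀‖ : ℂ) ≠ 0 := by exact_mod_cast hr
  have hcC : ((1 - l + l * ‖z₀‖ : ℝ) : ℂ) ≠ 0 := by exact_mod_cast hcne
  simp only [nsmul_eq_mul, Nat.cast_ofNat, pow_one]
  push_cast at hcC ⊢
  set R : ℂ := ((‖z₀‖ : ℝ) : ℂ) with hR
  set C : ℂ := 1 - (l : ℂ) + (l : ℂ) * R with hCdef
  clear_value R C
  field_simp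
  have h9 : R ^ 9 * R⁻¹ ^ 9 = 1 := by
    rw [← mul_pow, mul_inv_cancel₀ hrC, one_pow]
  linear_combination
end

section
/- Set ε₀ = (1/2)√(1-λ). For every z₀ ∈ ℂ with |z₀| ≥ 1 and every tangent vector v = ρ z₀ (1 + iε) with ρ ≥ 0 and |ε| ≤ ε₀, one has |D_{z₀}F_λ(v)|² ≤ λ̃ |v|², where λ̃ = (λ² + 4ε₀²)/(1 + ε₀²). Moreover, if λ is sufficiently close to 1 then λ̃ ∈ (0,1). -/
/-- The derivative of F_λ contracts vectors in the stable cone over {|z₀| ≥ 1}: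
for v = ρz₀(1+iε) with ρ ≥ 0 and |ε| ≤ ε₀ = (1/2)√(1-λ) we have
|D_{z₀}F_λ(v)|² ≤ λ̃|v|² where λ̃ = (λ² + 4ε₀²)/(1 + ε₀²); moreover for λ
sufficiently close to 1, λ̃ ∈ (0,1). -/
theorem stmt_4 :
    (∀ l ∈ Set.Ioo (0 : ℝ) 1, ∀ z₀ : ℂ, 1 ≤ ‖z₀‖ →
      ∀ ρ ε : ℝ, 0 ≤ ρ → |ε| ≤ Real.sqrt (1 - l) / 2 →
        ‖(Fl l z₀ - 1) *
            (((ρ * l * ‖z₀‖ / (1 - l + l * ‖z₀‖) : ℝ) : ℂ)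
              + 2 * ((ρ * ε : ℝ) : ℂ) * Complex.I)‖ ^ 2 ≤
          ((l ^ 2 + 4 * (Real.sqrt (1 - l) / 2) ^ 2) / (1 + (Real.sqrt (1 - l) / 2) ^ 2)) *
            ‖(ρ : ℂ) * z₀ * (1 + (ε : ℂ) * Complex.I)‖ ^ 2) ∧
    (∃ l₁ ∈ Set.Ioo (0 : ℝ) 1, ∀ l ∈ Set.Ioo l₁ 1,
      (l ^ 2 + 4 * (Real.sqrt (1 - l) / 2) ^ 2) / (1 + (Real.sqrt (1 - l) / 2) ^ 2)
        ∈ Set.Ioo (0 : ℝ) 1) := by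
  constructor
  · intro l hl z₀ hz ρ ε hρ hε
    obtain ⟨hl0, hl1⟩ := hl
    set r := ‖z₀‖ with hrdef
    have hr1 : 1 ≤ r := hz
    have hr0 : (0:ℝ) < r := lt_of_lt_of_le one_pos hr1
    have hc : (0:ℝ) < 1 - l + l * r := by nlinarith
    have hsq : (Real.sqrt (1 - l) / 2) ^ 2 = (1 - l) / 4 := by
      rw [div_pow, Real.sq_sqrt (by linarith)]; norm_num
    have hε2 : ε ^ 2 ≤ (1 - l) / 4 := by
      have h1 : |ε| ^ 2 ≤ (Real.sqrt (1 - l) / 2) ^ 2 :=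
        pow_le_pow_left₀ (abs_nonneg ε) hε 2
      rw [sq_abs] at h1; rwa [hsq] at h1
    have habsX : ‖Fl l z₀ - 1‖ = 1 - l + l * r := by
      unfold Fl
      rw [add_sub_cancel_right, norm_mul, norm_pow, norm_div, Complex.norm_real,
        Complex.norm_real, Real.norm_eq_abs, Real.norm_eq_abs, abs_of_pos hc, abs_of_pos hr0, ← hrdef]
      field_simp
    rw [norm_mul, mul_pow, habsX]
    have habsY : ‖(((ρ * l * r / (1 - l + l * r) : ℝ)) : ℂ)
        + 2 * ((ρ * ε : ℝ) : ℂ) * Complex.I‖ ^ 2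
        = (ρ * l * r / (1 - l + l * r)) ^ 2 + (2 * (ρ * ε)) ^ 2 := by
      have : ((((ρ * l * r / (1 - l + l * r) : ℝ)) : ℂ)
          + 2 * ((ρ * ε : ℝ) : ℂ) * Complex.I)
          = (((ρ * l * r / (1 - l + l * r) : ℝ)) : ℂ)
          + ((2 * (ρ * ε) : ℝ) : ℂ) * Complex.I := by push_cast; ring
      rw [this, Complex.sq_norm, Complex.normSq_add_mul_I]
    rw [habsY]
    have habsW : ‖1 + (ε : ℂ) * Complex.I‖ ^ 2 = 1 + ε ^ 2 := by
      have h1 : (1 + (ε : ℂ) * Complex.I) = ((1 : ℝ) : ℂ) + (ε : ℂ) * Complex.I := by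
        push_cast; ring
      rw [h1, Complex.sq_norm, Complex.normSq_add_mul_I]; norm_num
    have habsZ : ‖(ρ : ℂ) * z₀ * (1 + (ε : ℂ) * Complex.I)‖ ^ 2
        = ρ ^ 2 * r ^ 2 * (1 + ε ^ 2) := by
      rw [norm_mul, norm_mul, mul_pow, mul_pow, habsW, Complex.norm_real, Real.norm_eq_abs, sq_abs, ← hrdef]
    rw [habsZ, hsq]
    clear_value r
    have hcne : (1 - l + l * r) ≠ 0 := ne_of_gt hc
    have hd : (0:ℝ) < 1 + (1 - l) / 4 := by linarith
    rw [div_mul_eq_mul_div, le_div_iff₀ hd]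
    have hcr : 1 - l + l * r ≤ r := by nlinarith
    have expand : (1 - l + l * r) ^ 2 * ((ρ * l * r / (1 - l + l * r)) ^ 2
        + (2 * (ρ * ε)) ^ 2)
        = (ρ * l * r) ^ 2 + (1 - l + l * r) ^ 2 * (2 * (ρ * ε)) ^ 2 := by
      rw [div_pow, mul_add, mul_div_cancel₀ _ (pow_ne_zero 2 hcne)]
    rw [expand]
    have hA : 0 ≤ ρ ^ 2 * ε ^ 2 * (r ^ 2 - (1 - l + l * r) ^ 2) :=
      mul_nonneg (mul_nonneg (sq_nonneg ρ) (sq_nonneg ε))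
        (by nlinarith)
    have hB : 0 ≤ ρ ^ 2 * r ^ 2 * (4 - l ^ 2) * ((1 - l) / 4 - ε ^ 2) :=
      mul_nonneg (mul_nonneg (mul_nonneg (sq_nonneg ρ) (sq_nonneg r))
        (by nlinarith)) (by linarith)
    linarith [hB, mul_nonneg hA (show (0:ℝ) ≤ 5 - l by linarith)]
  · refine ⟨1/2, by norm_num, fun l hl => ?_⟩
    obtain ⟨hl0, hl1⟩ := hl
    have hsq : (Real.sqrt (1 - l) / 2) ^ 2 = (1 - l) / 4 := by
      rw [div_pow, Real.sq_sqrt (by linarith)]; norm_num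
    rw [hsq]
    have hd : (0:ℝ) < 1 + (1 - l) / 4 := by linarith
    constructor
    · apply div_pos _ hd; nlinarith
    · rw [div_lt_one hd]; nlinarith
end

section
/- For every z₀ ∈ ℂ \ {0} and every vector v = z₀(i + ε)ρ with ρ ≥ 0 and |ε| ≤ 1, one has |D_{z₀}F_λ(v)| ≥ λ√(5/2) · |v|. -/
lemma stmt_5_aux (l r c ρ ε : ℝ) (hε2 : ε ^ 2 ≤ 1) (hlc2 : l * r * (l * r) ≤ c * c) :
    l ^ 2 * (5 / 2) * (ρ * r) ^ 2 * (ε ^ 2 + 1) ≤ (ρ * ε * l * r) ^ 2 + 4 * c ^ 2 * ρ ^ 2 := by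
  nlinarith [mul_le_mul_of_nonneg_right hε2 (sq_nonneg (ρ * r * l)),
    mul_le_mul_of_nonneg_left hlc2 (sq_nonneg ρ)]

/-- Expansion in the wide unstable cone: for v = ρz₀(i + ε), ρ ≥ 0, |ε| ≤ 1,
|D_{z₀}F_λ(v)| ≥ λ√(5/2)·|v|, where D_{z₀}F_λ(z₀(a+ib)) =
(F_λ(z₀)-1)(aλ|z₀|/(1-λ+λ|z₀|) + 2bi). -/
theorem stmt_5 (l : ℝ) (hl : l ∈ Set.Ioo (0 : ℝ) 1) (z₀ : ℂ) (hz : z₀ ≠ 0)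
    (ρ ε : ℝ) (hρ : 0 ≤ ρ) (hε : |ε| ≤ 1) :
    l * Real.sqrt (5 / 2) * ‖(ρ : ℂ) * z₀ * (Complex.I + (ε : ℂ))‖ ≤
      ‖(Fl l z₀ - 1) *
        (((ρ * ε * l * ‖z₀‖ / (1 - l + l * ‖z₀‖) : ℝ) : ℂ)
          + 2 * (ρ : ℂ) * Complex.I)‖ := by
  obtain ⟨hl0, hl1⟩ := hl
  set r := ‖z₀‖ with hrdef
  have hr : 0 < r := norm_pos_iff.mpr hz
  have hc : 0 < 1 - l + l * r := by nlinarith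
  set c := 1 - l + l * r with hcdef
  -- abs of Fl - 1
  have h1 : ‖Fl l z₀ - 1‖ = c := by
    have : Fl l z₀ - 1 = ((c : ℝ) : ℂ) * (z₀ / (r : ℂ)) ^ 2 := by
      simp only [Fl, hcdef, hrdef, add_sub_cancel_right]
    rw [this, norm_mul, norm_pow, norm_div]
    simp [← hrdef, Complex.norm_real, abs_of_pos hc, abs_of_pos hr, div_self hr.ne']
  -- abs of second factor
  have h2 : ‖((ρ * ε * l * r / c : ℝ) : ℂ) + 2 * (ρ : ℂ) * Complex.I‖
      = Real.sqrt ((ρ * ε * l * r / c) ^ 2 + (2 * ρ) ^ 2) := by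
    rw [Complex.norm_def, Complex.normSq_apply]
    norm_num [pow_two]
  -- abs of v
  have h3 : ‖(ρ : ℂ) * z₀ * (Complex.I + (ε : ℂ))‖
      = ρ * r * Real.sqrt (ε ^ 2 + 1) := by
    rw [norm_mul, norm_mul, Complex.norm_real, Real.norm_eq_abs, abs_of_nonneg hρ]
    congr 1
    rw [Complex.norm_def, Complex.normSq_apply]
    norm_num [pow_two]
  rw [h3, norm_mul, h1, h2]
  have hε2 : ε ^ 2 ≤ 1 := by nlinarith [sq_abs ε, abs_nonneg ε]
  have hcr : l * r ≤ c := by nlinarith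
  have key : (l * Real.sqrt (5 / 2) * (ρ * r * Real.sqrt (ε ^ 2 + 1))) ^ 2
      ≤ (c * Real.sqrt ((ρ * ε * l * r / c) ^ 2 + (2 * ρ) ^ 2)) ^ 2 := by
    have e1 : Real.sqrt (5 / 2) ^ 2 = 5 / 2 := Real.sq_sqrt (by norm_num)
    have e2 : Real.sqrt (ε ^ 2 + 1) ^ 2 = ε ^ 2 + 1 := Real.sq_sqrt (by positivity)
    have e3 : Real.sqrt ((ρ * ε * l * r / c) ^ 2 + (2 * ρ) ^ 2) ^ 2
        = (ρ * ε * l * r / c) ^ 2 + (2 * ρ) ^ 2 := Real.sq_sqrt (by positivity)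
    have hcne : c ≠ 0 := hc.ne'
    have hlc2 : (l * r) * (l * r) ≤ c * c :=
      mul_self_le_mul_self (by positivity) hcr
    have e4 : c ^ 2 * ((ρ * ε * l * r / c) ^ 2 + (2 * ρ) ^ 2)
        = (ρ * ε * l * r) ^ 2 + 4 * c ^ 2 * ρ ^ 2 := by
      field_simp
      ring
    calc (l * Real.sqrt (5 / 2) * (ρ * r * Real.sqrt (ε ^ 2 + 1))) ^ 2
        = l ^ 2 * (5 / 2) * (ρ * r) ^ 2 * (ε ^ 2 + 1) := by
          rw [show (l * Real.sqrt (5 / 2) * (ρ * r * Real.sqrt (ε ^ 2 + 1))) ^ 2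
            = l ^ 2 * Real.sqrt (5/2) ^ 2 * (ρ * r) ^ 2 * Real.sqrt (ε^2+1) ^ 2 by ring,
            e1, e2]
      _ ≤ (ρ * ε * l * r) ^ 2 + 4 * c ^ 2 * ρ ^ 2 := by
          exact stmt_5_aux l r c ρ ε hε2 hlc2
      _ = (c * Real.sqrt ((ρ * ε * l * r / c) ^ 2 + (2 * ρ) ^ 2)) ^ 2 := by
          rw [mul_pow c, e3, e4]
  have hL : 0 ≤ l * Real.sqrt (5 / 2) * (ρ * r * Real.sqrt (ε ^ 2 + 1)) := by positivity
  have hR : 0 ≤ c * Real.sqrt ((ρ * ε * l * r / c) ^ 2 + (2 * ρ) ^ 2) := by positivity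
  nlinarith [key, hL, hR]
end

section
/- Let Q⁺ = {z : Re z ≤ 0, Im z ≥ 0} and Q⁻ = {z : Re z ≤ 0, Im z ≤ 0}. If z' ∈ Q⁺ \ {0} and z = F_λ(z') ∈ Q⁻, then |z' - 1| ≥ √2. -/
/-- If z' ∈ Q⁺ \ {0} (Re z' ≤ 0, Im z' ≥ 0) and F_λ(z') ∈ Q⁻ (Re ≤ 0, Im ≤ 0),
then |z' - 1| ≥ √2. -/
theorem stmt_10 (l : ℝ) (hl : l ∈ Set.Ioo (0 : ℝ) 1) (z' : ℂ) (hz : z' ≠ 0)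
    (hre : z'.re ≤ 0) (him : 0 ≤ z'.im)
    (hre' : (Fl l z').re ≤ 0) (him' : (Fl l z').im ≤ 0) :
    Real.sqrt 2 ≤ ‖z' - 1‖ := by
  by_contra h
  push_neg at h
  -- |z' - 1|^2 < 2
  have h2 : ‖z' - 1‖^2 < 2 := by
    have := Real.sq_sqrt (by norm_num : (2:ℝ) ≥ 0).le
    calc ‖z' - 1‖^2 < (Real.sqrt 2)^2 := by
          apply pow_lt_pow_left₀ h (norm_nonneg _) (by norm_num)
      _ = 2 := Real.sq_sqrt (by norm_num)
  have hsq : ‖z' - 1‖^2 = ‖z'‖^2 - 2 * z'.re + 1 := by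
    rw [Complex.sq_norm, Complex.sq_norm, Complex.normSq_sub]
    simp [Complex.normSq_apply, Complex.mul_re]
    ring
  have habs1 : ‖z'‖ < 1 := by
    have : ‖z'‖^2 < 1 := by nlinarith
    nlinarith [norm_nonneg z']
  -- |Fl l z' - 1| < 1
  have hne : (‖z'‖ : ℂ) ≠ 0 := by
    simpa using (norm_ne_zero_iff.mpr hz)
  have habsF : ‖Fl l z' - 1‖ < 1 := by
    have : Fl l z' - 1 = ((1 - l + l * ‖z'‖ : ℝ) : ℂ) * (z' / (‖z'‖ : ℂ)) ^ 2 := by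
      simp [Fl]
    rw [this]
    rw [norm_mul, norm_pow, norm_div]
    simp only [Complex.norm_real, Real.norm_eq_abs, abs_norm]
    rw [div_self ((norm_ne_zero_iff.mpr hz))]
    have h01 : 0 < 1 - l + l * ‖z'‖ := by
      nlinarith [hl.1, hl.2, norm_nonneg z']
    rw [abs_of_pos h01]
    nlinarith [hl.1]
  have : (1 : ℝ) - (Fl l z').re ≤ ‖Fl l z' - 1‖ := by
    have := Complex.abs_re_le_norm (Fl l z' - 1)
    simp only [Complex.sub_re, Complex.one_re] at this
    calc (1:ℝ) - (Fl l z').re ≤ |(Fl l z').re - 1| := by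
          rw [abs_sub_comm]; exact le_abs_self _
      _ ≤ _ := this
  linarith
end

section
/- Let Q⁺ = {z : Re z ≤ 0, Im z ≥ 0} and Q⁻ = {z : Re z ≤ 0, Im z ≤ 0}. If z' ∈ Q⁺ \ {0} with |z'| ≥ 1 and z = F_λ(z') ∈ Q⁻, then |z' - 1| - 1 > λ⁻¹(|z - 1| - 1). -/
/-- If z' ∈ Q⁺ \ {0} with |z'| ≥ 1 and z = F_λ(z') ∈ Q⁻, then
|z' - 1| - 1 > λ⁻¹(|z - 1| - 1). -/
theorem stmt_11 (l : ℝ) (hl : l ∈ Set.Ioo (0 : ℝ) 1) (z' : ℂ) (hz : z' ≠ 0)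
    (hre : z'.re ≤ 0) (him : 0 ≤ z'.im) (habs : 1 ≤ ‖z'‖)
    (hre' : (Fl l z').re ≤ 0) (him' : (Fl l z').im ≤ 0) :
    l⁻¹ * (‖Fl l z' - 1‖ - 1) < ‖z' - 1‖ - 1 := by
  obtain ⟨hl0, hl1⟩ := hl
  set r := ‖z'‖ with hr
  have hr0 : (0:ℝ) < r := lt_of_lt_of_le one_pos habs
  have hc : (0:ℝ) ≤ 1 - l + l * r := by nlinarith
  have habs1 : ‖Fl l z' - 1‖ = 1 - l + l * r := by
    have : Fl l z' - 1 = ((1 - l + l * r : ℝ) : ℂ) * (z' / (r : ℂ)) ^ 2 := by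
      simp [Fl, hr]
    rw [this, norm_mul, norm_pow, norm_div, Complex.norm_real, Real.norm_eq_abs,
      Complex.norm_real, Real.norm_eq_abs, abs_of_nonneg hc, abs_of_pos hr0, ← hr,
      div_self (ne_of_gt hr0)]
    ring
  have key : r < ‖z' - 1‖ := by
    have h2 : r ^ 2 < (‖z' - 1‖) ^ 2 := by
      rw [Complex.sq_norm, Complex.sq_norm, Complex.normSq_apply, Complex.normSq_apply]
      simp only [Complex.sub_re, Complex.sub_im, Complex.one_re, Complex.one_im]
      nlinarith
    exact lt_of_pow_lt_pow_left₀ 2 (norm_nonneg _) h2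
  rw [habs1]
  have : l⁻¹ * (1 - l + l * r - 1) = r - 1 := by
    field_simp; ring
  rw [this]
  linarith
end

section
/- For any two points z, z' ∈ ℂ \ {0} with arg(z), arg(z') ∈ [0, π/2], one has |G(z) - G(z')| ≥ |z - z'|, with equality if and only if z/z' is real (i.e. z and z' have the same argument). -/
open Complex

lemma mulexp_mul_conj (r s t u : ℝ) :
    (r:ℂ) * Complex.exp (t*Complex.I) * (starRingEnd ℂ) ((s:ℂ) * Complex.exp (u*Complex.I)) =
      ((r*s : ℝ):ℂ) * Complex.exp (((t-u):ℝ)*Complex.I) := by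
  rw [map_mul, Complex.conj_ofReal, ← Complex.exp_conj]
  have h1 : (starRingEnd ℂ) ((u:ℂ) * Complex.I) = -((u:ℂ)*Complex.I) := by simp
  rw [h1]
  rw [show (r:ℂ) * Complex.exp (↑t*Complex.I) * ((s:ℂ) * Complex.exp (-(↑u*Complex.I)))
      = ((r*s:ℝ):ℂ) * (Complex.exp (↑t*Complex.I) * Complex.exp (-(↑u*Complex.I))) by push_cast; ring]
  rw [← Complex.exp_add]
  congr 2
  push_cast; ring

lemma normSq_aux (r s t u : ℝ) :
    Complex.normSq ((r:ℂ) * Complex.exp (t*Complex.I) - (s:ℂ) * Complex.exp (u*Complex.I)) =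
      r^2 + s^2 - 2*r*s*Real.cos (t-u) := by
  rw [Complex.normSq_sub, mulexp_mul_conj, Complex.re_ofReal_mul, Complex.exp_ofReal_mul_I_re]
  simp [Complex.normSq_mul, Complex.normSq_ofReal, Complex.normSq_eq_norm_sq,
    Complex.norm_exp_ofReal_mul_I]
  ring

noncomputable def Gd (z : ℂ) : ℂ := z ^ 2 / (‖z‖ : ℂ) + 1

/-- For z, z' ≠ 0 with arguments in [0, π/2], |G(z) - G(z')| ≥ |z - z'|, with
equality if and only if z/z' is real. -/
theorem stmt_15 (z z' : ℂ) (hz : z ≠ 0) (hz' : z' ≠ 0)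
    (ha : Complex.arg z ∈ Set.Icc 0 (Real.pi / 2))
    (ha' : Complex.arg z' ∈ Set.Icc 0 (Real.pi / 2)) :
    ‖z - z'‖ ≤ ‖Gd z - Gd z'‖ ∧
      (‖Gd z - Gd z'‖ = ‖z - z'‖ ↔ (z / z').im = 0) := by
  obtain ⟨ha0, ha1⟩ := ha
  obtain ⟨hb0, hb1⟩ := ha'
  have hr : (0:ℝ) < ‖z‖ := norm_pos_iff.mpr hz
  have hs : (0:ℝ) < ‖z'‖ := norm_pos_iff.mpr hz'
  set r := ‖z‖ with hrdef
  set s := ‖z'‖ with hsdef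
  set a := Complex.arg z with hadef
  set b := Complex.arg z' with hbdef
  have hr0 : (r:ℂ) ≠ 0 := by exact_mod_cast hr.ne'
  have hs0 : (s:ℂ) ≠ 0 := by exact_mod_cast hs.ne'
  have hzeq : z = (r:ℂ) * Complex.exp (a * Complex.I) := (Complex.norm_mul_exp_arg_mul_I z).symm
  have hz'eq : z' = (s:ℂ) * Complex.exp (b * Complex.I) := (Complex.norm_mul_exp_arg_mul_I z').symm
  -- G difference
  have hGz : ∀ (t c : ℝ), 0 < t → ((t:ℂ) * Complex.exp (c * Complex.I)) ^ 2 / (t:ℂ)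
      = (t:ℂ) * Complex.exp (((2*c):ℝ) * Complex.I) := by
    intro t c ht
    have ht0 : (t:ℂ) ≠ 0 := by exact_mod_cast ht.ne'
    have h2 : Complex.exp (2 * (c:ℂ) * Complex.I) = Complex.exp ((c:ℂ) * Complex.I) ^ 2 := by
      rw [← Complex.exp_nat_mul]
      congr 1
      push_cast; ring
    field_simp
    rw [← h2]; congr 1; push_cast; ring
  have hG : Gd z - Gd z' = (r:ℂ) * Complex.exp (((2*a):ℝ) * Complex.I)
      - (s:ℂ) * Complex.exp (((2*b):ℝ) * Complex.I) := by
    unfold Gd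
    rw [← hrdef, ← hsdef]
    rw [show z ^ 2 / (r:ℂ) = ((r:ℂ) * Complex.exp (a * Complex.I)) ^ 2 / (r:ℂ) by rw [← hzeq]]
    rw [show z' ^ 2 / (s:ℂ) = ((s:ℂ) * Complex.exp (b * Complex.I)) ^ 2 / (s:ℂ) by rw [← hz'eq]]
    rw [hGz r a hr, hGz s b hs]
    ring
  -- normSq formulas
  have hnz : Complex.normSq (z - z') = r^2 + s^2 - 2*r*s*Real.cos (a-b) := by
    rw [hzeq, hz'eq]
    have := normSq_aux r s a b
    simpa using this
  have hnG : Complex.normSq (Gd z - Gd z') = r^2 + s^2 - 2*r*s*Real.cos (2*a-2*b) := by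
    rw [hG]
    have := normSq_aux r s (2*a) (2*b)
    simpa using this
  -- trig facts
  have hdlo : -(Real.pi/2) ≤ a - b := by linarith
  have hdhi : a - b ≤ Real.pi/2 := by linarith
  have hc0 : 0 ≤ Real.cos (a-b) := Real.cos_nonneg_of_mem_Icc ⟨hdlo, hdhi⟩
  have hc1 : Real.cos (a-b) ≤ 1 := Real.cos_le_one _
  have hcos2 : Real.cos (2*a-2*b) = 2 * Real.cos (a-b)^2 - 1 := by
    rw [show 2*a-2*b = 2*(a-b) by ring, Real.cos_two_mul]
  have hdiff : Complex.normSq (Gd z - Gd z') - Complex.normSq (z - z')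
      = 2*r*s*(Real.cos (a-b) - Real.cos (2*a-2*b)) := by
    rw [hnz, hnG]; ring
  have hkey : 0 ≤ Real.cos (a-b) - Real.cos (2*a-2*b) := by
    rw [hcos2]; nlinarith
  have hle : Complex.normSq (z - z') ≤ Complex.normSq (Gd z - Gd z') := by
    have h2 : 0 ≤ 2*r*s*(Real.cos (a-b) - Real.cos (2*a-2*b)) := by positivity
    linarith
  constructor
  · rw [Complex.norm_def, Complex.norm_def]
    exact Real.sqrt_le_sqrt hle
  · -- equality iff
    have habs_iff : ‖Gd z - Gd z'‖ = ‖z - z'‖ ↔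
        Complex.normSq (Gd z - Gd z') = Complex.normSq (z - z') := by
      rw [Complex.norm_def, Complex.norm_def]
      exact Real.sqrt_inj (Complex.normSq_nonneg _) (Complex.normSq_nonneg _)
    have hzz' : z / z' = ((r/s : ℝ):ℂ) * Complex.exp (((a-b):ℝ) * Complex.I) := by
      rw [hzeq, hz'eq]
      rw [show ((a-b:ℝ):ℂ) * Complex.I = (a:ℂ)*Complex.I - (b:ℂ)*Complex.I by push_cast; ring,
        Complex.exp_sub]
      push_cast
      field_simp
    have him : (z / z').im = (r/s) * Real.sin (a-b) := by
      rw [hzz', Complex.im_ofReal_mul, Complex.exp_ofReal_mul_I_im]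
    rw [habs_iff, him]
    have hrs : r/s ≠ 0 := by positivity
    constructor
    · intro h
      have h2 : 2*r*s*(Real.cos (a-b) - Real.cos (2*a-2*b)) = 0 := by linarith
      have h3 : Real.cos (a-b) - Real.cos (2*a-2*b) = 0 :=
        (mul_eq_zero.mp h2).resolve_left (by positivity)
      have h4 : (1 - Real.cos (a-b)) * (1 + 2*Real.cos (a-b)) = 0 := by
        rw [hcos2] at h3; nlinarith
      have hcone : Real.cos (a-b) = 1 := by
        rcases mul_eq_zero.mp h4 with h5 | h5
        · linarith
        · linarith
      have hd0 : a - b = 0 := by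
        have h2pi : (0:ℝ) < Real.pi := Real.pi_pos
        rw [Real.cos_eq_one_iff_of_lt_of_lt (by linarith) (by linarith)] at hcone
        exact hcone
      rw [hd0, Real.sin_zero, mul_zero]
    · intro h
      have hsin0 : Real.sin (a-b) = 0 := by
        rcases mul_eq_zero.mp h with h1 | h1
        · exact absurd h1 hrs
        · exact h1
      have hd0 : a - b = 0 := by
        have hpi : (0:ℝ) < Real.pi := Real.pi_pos
        have := (Real.sin_eq_zero_iff_of_lt_of_lt (by linarith) (by linarith)).mp hsin0
        exact this
      rw [hnG, hnz, show (2*a-2*b) = 2*(a-b) by ring, hd0]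
      norm_num
end

section
/- For every z₀ ∈ ℂ \ {0} and ρ, ε ∈ ℝ with ρ > 0 and |ε| ≤ 1/3, suppose 1 - λ + λ|z₀| ≥ 20, and define ρ' ≥ 0, ε' ∈ ℝ by D_{z₀}F_λ(ρ z₀(i + ε)) = F_λ(z₀) ρ'(i + ε'). Then |ε' − ε/2| < 1/6; in particular |ε'| ≤ 1/3, i.e. the unstable cone K(z₀) = {z₀ρ(i+ε) : ρ ≥ 0, |ε| ≤ 1/3} is mapped into the interior of K(F_λ(z₀)) (together with the zero vector). -/
set_option maxHeartbeats 1000000 in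
/-- Invariance of the unstable cone: if 1 - λ + λ|z₀| ≥ 20 and one writes
D_{z₀}F_λ(ρz₀(i+ε)) = F_λ(z₀)ρ'(i+ε') with ρ > 0, |ε| ≤ 1/3, ρ' ≥ 0, then
|ε' − ε/2| < 1/6; in particular |ε'| ≤ 1/3. -/
theorem stmt_17 (l : ℝ) (hl : l ∈ Set.Ioo (0 : ℝ) 1) (z₀ : ℂ) (hz : z₀ ≠ 0)
    (h20 : 20 ≤ 1 - l + l * ‖z₀‖)
    (ρ ε ρ' ε' : ℝ) (hρ : 0 < ρ) (hε : |ε| ≤ 1 / 3) (hρ' : 0 ≤ ρ')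
    (hdec : (Fl l z₀ - 1) *
        (((ρ * ε * l * ‖z₀‖ / (1 - l + l * ‖z₀‖) : ℝ) : ℂ)
          + 2 * (ρ : ℂ) * Complex.I)
      = Fl l z₀ * (ρ' : ℂ) * (Complex.I + (ε' : ℂ))) :
    |ε' - ε / 2| < 1 / 6 ∧ |ε'| ≤ 1 / 3 := by
  obtain ⟨hl0, hl1⟩ := hl
  set A : ℝ := 1 - l + l * ‖z₀‖ with hAdef
  have hA0 : (0:ℝ) < A := by linarith
  have hz0 : (0:ℝ) < ‖z₀‖ := by
    simpa [norm_pos_iff] using hz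
  have hu : ‖(z₀ / (‖z₀‖ : ℂ)) ^ 2‖ = 1 := by
    rw [norm_pow, norm_div, Complex.norm_real, Real.norm_eq_abs, abs_of_pos hz0, div_self (ne_of_gt hz0)]
    norm_num
  have hFd : Fl l z₀ - 1 = ((A:ℝ):ℂ) * (z₀ / (‖z₀‖ : ℂ)) ^ 2 := by
    unfold Fl; rw [hAdef]; ring
  have habsF1 : ‖Fl l z₀ - 1‖ = A := by
    rw [hFd, norm_mul, hu, Complex.norm_real, Real.norm_eq_abs, abs_of_pos hA0, mul_one]
  have hF19 : 19 ≤ ‖Fl l z₀‖ := by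
    have h := norm_add_le (Fl l z₀) (-1)
    rw [← sub_eq_add_neg, habsF1, norm_neg, norm_one] at h
    linarith
  have hFne : Fl l z₀ ≠ 0 := by
    intro h; rw [h] at hF19; simp at hF19; linarith
  set w : ℂ := (Fl l z₀ - 1) / Fl l z₀ with hwdef
  set x : ℝ := ρ * ε * l * ‖z₀‖ / A with hxdef
  have hkey : w * (((x:ℝ):ℂ) + 2 * (ρ:ℂ) * Complex.I) = (ρ':ℂ) * (Complex.I + (ε':ℂ)) := by
    rw [hwdef]
    field_simp
    linear_combination hdec
  have hw1 : w - 1 = -(1 / Fl l z₀) := by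
    rw [hwdef]; field_simp; ring
  have habsw : ‖w - 1‖ ≤ 1/19 := by
    rw [hw1, norm_neg, norm_div, norm_one]
    rw [div_le_div_iff₀ (by linarith) (by norm_num)]
    linarith
  have hp : |w.re - 1| ≤ 1/19 := by
    have h1 : |(w-1).re| ≤ ‖w-1‖ := Complex.abs_re_le_norm _
    simpa using h1.trans habsw
  have hq : |w.im| ≤ 1/19 := by
    have h1 : |(w-1).im| ≤ ‖w-1‖ := Complex.abs_im_le_norm _
    simpa using h1.trans habsw
  set p := w.re
  set q := w.im
  have h1 : p * x - q * (2*ρ) = ρ' * ε' := by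
    have := congrArg Complex.re hkey
    simp [Complex.mul_re, Complex.mul_im, Complex.add_re, Complex.add_im,
      Complex.I_re, Complex.I_im, Complex.ofReal_re, Complex.ofReal_im] at this
    linarith [this]
  have h2 : q * x + p * (2*ρ) = ρ' := by
    have := congrArg Complex.im hkey
    simp [Complex.mul_re, Complex.mul_im, Complex.add_re, Complex.add_im,
      Complex.I_re, Complex.I_im, Complex.ofReal_re, Complex.ofReal_im] at this
    linarith [this]
  clear_value w
  set t : ℝ := l * ‖z₀‖ / A with htdef
  have hxt : x = ρ * ε * t := by rw [hxdef, htdef]; field_simp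
  have ht2 : t ≤ 1 := by
    rw [htdef, div_le_one hA0]; linarith
  have ht1 : 19/20 ≤ t := by
    rw [htdef, le_div_iff₀ hA0]
    nlinarith
  rw [hxt] at h1 h2
  clear_value t x p q A
  clear hdec hkey hw1 habsw hu hxt hxdef htdef hF19 hFne hwdef hAdef hz0 hz
  clear hFd habsF1 w z₀
  obtain ⟨hpl, hpu⟩ := abs_le.mp hp
  obtain ⟨hql, hqu⟩ := abs_le.mp hq
  obtain ⟨hel, heu⟩ := abs_le.mp hε
  -- lower bound on ρ'
  have hqet : |q * ε * t| ≤ 1/57 := by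
    rw [abs_mul, abs_mul]
    have h0t : |t| ≤ 1 := by rw [abs_le]; constructor <;> linarith
    calc |q| * |ε| * |t| ≤ (1/19) * (1/3) * 1 := by
          gcongr <;> simp [abs_nonneg]
      _ ≤ 1/57 := by norm_num
  have hρ'lb : 107/57 * ρ ≤ ρ' := by
    obtain ⟨hq1, hq2⟩ := abs_le.mp hqet
    nlinarith
  -- numerator bound
  have b1 : |p * ε * (t - 1)| ≤ 1/57 := by
    rw [abs_mul, abs_mul]
    have hap : |p| ≤ 20/19 := by rw [abs_le]; constructor <;> linarith
    have hat : |t - 1| ≤ 1/20 := by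
      rw [abs_le]
      constructor <;> linarith
    calc |p| * |ε| * |t-1| ≤ (20/19) * (1/3) * (1/20) := by
          gcongr <;> simp [abs_nonneg]
      _ ≤ 1/57 := by norm_num
  have b2 : |2 * q| ≤ 2/19 := by
    rw [abs_mul, abs_two]
    linarith [hq]
  have b3 : |q * ε^2 * t / 2| ≤ 1/342 := by
    rw [abs_div, abs_mul, abs_mul, abs_two]
    have h0t : |t| ≤ 1 := by rw [abs_le]; constructor <;> linarith
    have he2 : |ε^2| ≤ 1/9 := by
      rw [abs_of_nonneg (sq_nonneg ε), ← sq_abs]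
      calc |ε|^2 ≤ (1/3)^2 := pow_le_pow_left₀ (abs_nonneg ε) hε 2
        _ ≤ 1/9 := by norm_num
    calc |q| * |ε^2| * |t| / 2 ≤ (1/19) * (1/9) * 1 / 2 := by
          gcongr <;> simp [abs_nonneg]
      _ ≤ 1/342 := by norm_num
  have hM : |p * ε * (t-1) - 2*q - q * ε^2 * t / 2| ≤ 43/342 := by
    rw [abs_le] at b1 b2 b3 ⊢
    constructor <;> linarith [b1.1, b1.2, b2.1, b2.2, b3.1, b3.2]
  have hNe : ρ' * ε' - ρ' * (ε/2) = ρ * (p * ε * (t-1) - 2*q - q * ε^2 * t / 2) := by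
    linear_combination -h1 + (ε/2) * h2
  have hN : ρ' * |ε' - ε/2| ≤ 43/342 * ρ := by
    rw [← abs_of_nonneg hρ', ← abs_mul, mul_sub, hNe, abs_mul, abs_of_pos hρ]
    calc ρ * |p * ε * (t-1) - 2*q - q * ε^2 * t / 2| ≤ ρ * (43/342) :=
          mul_le_mul_of_nonneg_left hM hρ.le
      _ = 43/342 * ρ := by ring
  have goal1 : |ε' - ε / 2| < 1 / 6 := by
    by_contra hcon
    push_neg at hcon
    have h3 : 107/57 * ρ * (1/6) ≤ ρ' * |ε' - ε/2| :=
      mul_le_mul hρ'lb hcon (by norm_num) hρ'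
    linarith
  refine ⟨goal1, ?_⟩
  have htri : |ε'| ≤ |ε' - ε/2| + |ε/2| := by
    calc |ε'| = |(ε' - ε/2) + ε/2| := by ring_nf
      _ ≤ |ε' - ε/2| + |ε/2| := abs_add_le _ _
  have : |ε/2| ≤ 1/6 := by rw [abs_div, abs_two]; linarith
  linarith
end
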